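/- arXiv:math/0702648 — 2 statements merged into one kernel-verified Lean document; each statement's English description precedes it below -/
import Mathlib

section
/- Let ℓ : [B,∞) → (0,∞) be a slowly varying, locally bounded measurable function with ∫_B^∞ ℓ(s)/s ds = ∞, and define ℓ̃(x) := ∫_B^x ℓ(s)/s ds. Then ℓ(x)/ℓ̃(x) → 0 as x → ∞. -/
open Filter MeasureTheory

lemma sv_core (B : ℝ) (hB : 1 ≤ B) (ℓ : ℝ → ℝ)
    (hmeas : Measurable ℓ)
    (hpos : ∀ x, B ≤ x → 0 < ℓ x)
    (hloc : ∀ x : ℝ, ∃ C : ℝ, ∀ y ∈ Set.Icc B x, ℓ y ≤ C)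
    (hsv : ∀ lam : ℝ, 0 < lam →
      Tendsto (fun x => ℓ (lam * x) / ℓ x) atTop (nhds 1)) :
    Tendsto (fun x => (∫ s in Set.Ioc B x, ℓ s / s) / ℓ x) atTop atTop := by
  have hint : ∀ c : ℝ, IntegrableOn (fun s => ℓ s / s) (Set.Ioc B c) := by
    intro c
    obtain ⟨C, hC⟩ := hloc c
    apply Measure.integrableOn_of_bounded (M := max C 0) measure_Ioc_lt_top.ne
      (Measurable.aestronglyMeasurable (by fun_prop))
    filter_upwards [ae_restrict_mem measurableSet_Ioc] with s hs
    have h1 : (1:ℝ) ≤ s := le_trans hB hs.1.le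
    have hls : 0 < ℓ s := hpos s hs.1.le
    rw [Real.norm_eq_abs, abs_div, abs_of_pos hls, abs_of_pos (by linarith : (0:ℝ) < s)]
    calc ℓ s / s ≤ ℓ s / 1 := by
          apply div_le_div_of_nonneg_left hls.le one_pos h1
      _ = ℓ s := div_one _
      _ ≤ C := hC s ⟨hs.1.le, hs.2⟩
      _ ≤ max C 0 := le_max_left _ _
  rw [tendsto_atTop]
  intro M
  by_contra hcon
  rw [Filter.not_eventually] at hcon
  push_neg at hcon
  set K : ℝ := max M 0 with hK
  set lam : ℝ := Real.exp (-(K+1)) with hlamdef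
  have hlam0 : 0 < lam := Real.exp_pos _
  have hlam1 : lam < 1 := by
    rw [hlamdef, Real.exp_lt_one_iff]
    have : (0:ℝ) ≤ K := le_max_right _ _
    linarith
  have hp : ∃ᶠ x in atTop,
      ((∫ s in Set.Ioc B x, ℓ s / s) / ℓ x < M ∧ B / lam ≤ x) :=
    hcon.and_eventually (eventually_ge_atTop (B / lam))
  obtain ⟨xs, hxs, hx⟩ := Filter.exists_seq_forall_of_frequently hp
  -- basic facts about each xs n
  have hBpos : (0:ℝ) < B := lt_of_lt_of_le one_pos hB
  have hcfacts : ∀ n, B ≤ lam * xs n ∧ B ≤ xs n ∧ 0 < xs n := by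
    intro n
    have h1 : B / lam ≤ xs n := (hx n).2
    have h2 : B ≤ lam * xs n := by
      rw [div_le_iff₀ hlam0] at h1; linarith [mul_comm (xs n) lam]
    have h3 : B ≤ xs n := by nlinarith
    exact ⟨h2, h3, by linarith⟩
  set F : ℕ → ℝ → ℝ := fun n u => ℓ (xs n * u) / (u * ℓ (xs n)) with hF
  -- each F n is nonneg on Ioc lam 1 and integrable with integral < M
  have hFnonneg : ∀ n, ∀ u ∈ Set.Ioc lam 1, 0 ≤ F n u := by
    intro n u hu
    obtain ⟨h2, h3, h4⟩ := hcfacts n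
    have hu0 : 0 < u := lt_trans hlam0 hu.1
    have : 0 < ℓ (xs n * u) := hpos _ (by nlinarith [hu.1])
    have : 0 < ℓ (xs n) := hpos _ h3
    positivity
  have hFint : ∀ n, IntegrableOn (F n) (Set.Ioc lam 1) := by
    intro n
    obtain ⟨h2, h3, h4⟩ := hcfacts n
    obtain ⟨C, hC⟩ := hloc (xs n)
    have hl0 : 0 < ℓ (xs n) := hpos _ h3
    apply Measure.integrableOn_of_bounded (M := max C 0 / (lam * ℓ (xs n)))
      measure_Ioc_lt_top.ne
    · exact ((hmeas.comp (measurable_const_mul _)).div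
        (measurable_id.mul_const _)).aestronglyMeasurable
    · filter_upwards [ae_restrict_mem measurableSet_Ioc] with u hu
      have hu0 : 0 < u := lt_trans hlam0 hu.1
      have hmem : xs n * u ∈ Set.Icc B (xs n) :=
        ⟨by nlinarith [hu.1], by nlinarith [hu.2]⟩
      have hlcu : 0 < ℓ (xs n * u) := hpos _ hmem.1
      rw [Real.norm_eq_abs, abs_of_nonneg (hFnonneg n u hu)]
      exact div_le_div₀ (le_max_right C 0) (le_max_of_le_left (hC _ hmem))
        (mul_pos hlam0 hl0) (by nlinarith [hu.1])
  have hFlt : ∀ n, ∫ u in Set.Ioc lam 1, F n u < M := by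
    intro n
    obtain ⟨h2, h3, h4⟩ := hcfacts n
    have hl0 : 0 < ℓ (xs n) := hpos _ h3
    -- substitution
    have hsub : ∫ s in Set.Ioc (lam * xs n) (xs n), ℓ s / s
        = ∫ u in Set.Ioc lam 1, ℓ (xs n * u) / u := by
      rw [← intervalIntegral.integral_of_le (by nlinarith : lam * xs n ≤ xs n),
        ← intervalIntegral.integral_of_le hlam1.le]
      have hcvar := intervalIntegral.integral_comp_mul_left (a := lam) (b := 1)
        (fun s => ℓ s / s) (ne_of_gt h4)
      rw [mul_one] at hcvar
      have : xs n * lam = lam * xs n := mul_comm _ _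
      rw [← this]
      rw [smul_eq_mul] at hcvar
      have h5 : ∫ s in xs n * lam..xs n, ℓ s / s
          = xs n * ∫ u in lam..1, ℓ (xs n * u) / (xs n * u) := by
        rw [hcvar]; field_simp
      rw [h5, ← intervalIntegral.integral_const_mul]
      apply intervalIntegral.integral_congr
      intro u hu
      rw [Set.uIcc_of_le hlam1.le] at hu
      have hu0 : 0 < u := lt_of_lt_of_le hlam0 hu.1
      field_simp
    have hmono : ∫ s in Set.Ioc (lam * xs n) (xs n), ℓ s / s
        ≤ ∫ s in Set.Ioc B (xs n), ℓ s / s := by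
      apply setIntegral_mono_set (hint (xs n))
      · filter_upwards [ae_restrict_mem measurableSet_Ioc] with s hs
        have : 0 < ℓ s := hpos s hs.1.le
        have : 0 < s := lt_of_lt_of_le hBpos hs.1.le
        positivity
      · exact HasSubset.Subset.eventuallyLE (Set.Ioc_subset_Ioc_left h2)
    have key : ∫ u in Set.Ioc lam 1, F n u
        = (∫ u in Set.Ioc lam 1, ℓ (xs n * u) / u) / ℓ (xs n) := by
      rw [← integral_div]
      apply setIntegral_congr_fun measurableSet_Ioc
      intro u hu
      rw [hF]
      simp only []
      rw [div_div]
    rw [key, ← hsub]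
    calc (∫ s in Set.Ioc (lam * xs n) (xs n), ℓ s / s) / ℓ (xs n)
        ≤ (∫ s in Set.Ioc B (xs n), ℓ s / s) / ℓ (xs n) := by gcongr
      _ < M := (hx n).1
  have hM0 : 0 < M :=
    lt_of_le_of_lt (setIntegral_nonneg measurableSet_Ioc (hFnonneg 0)) (hFlt 0)
  have hIle : ∀ n, (∫⁻ u in Set.Ioc lam 1, ENNReal.ofReal (F n u)) ≤ ENNReal.ofReal M := by
    intro n
    rw [← ofReal_integral_eq_lintegral_ofReal (hFint n)
      ((ae_restrict_mem measurableSet_Ioc).mono (hFnonneg n))]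
    exact ENNReal.ofReal_le_ofReal (hFlt n).le
  have hFatou := lintegral_liminf_le (μ := volume.restrict (Set.Ioc lam 1))
      (f := fun n u => ENNReal.ofReal (F n u)) (u := atTop) (fun n =>
        ENNReal.measurable_ofReal.comp ((hmeas.comp (measurable_const_mul (xs n))).div
          (measurable_id.mul_const _)))
  have hpt : ∀ᵐ u ∂(volume.restrict (Set.Ioc lam 1)),
      ENNReal.ofReal (1/u) = liminf (fun n => ENNReal.ofReal (F n u)) atTop := by
    filter_upwards [ae_restrict_mem measurableSet_Ioc] with u hu
    have hu0 : 0 < u := lt_trans hlam0 hu.1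
    have ht : Tendsto (fun n => F n u) atTop (nhds (1/u)) := by
      have h := ((hsv u hu0).comp hxs).div_const u
      have heq : (fun n => F n u) = fun n => ℓ (u * xs n) / ℓ (xs n) / u := by
        funext n; rw [hF]; simp only []
        rw [mul_comm (xs n) u, div_div, mul_comm u (ℓ (xs n))]
      rw [heq]; exact h
    exact (((ENNReal.continuous_ofReal.tendsto _).comp ht).liminf_eq).symm
  have hlhs : (∫⁻ u in Set.Ioc lam 1, ENNReal.ofReal (1/u))
      ≤ liminf (fun n => ∫⁻ u in Set.Ioc lam 1, ENNReal.ofReal (F n u)) atTop := by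
    calc (∫⁻ u in Set.Ioc lam 1, ENNReal.ofReal (1/u))
        = ∫⁻ u in Set.Ioc lam 1, liminf (fun n => ENNReal.ofReal (F n u)) atTop :=
          lintegral_congr_ae hpt
      _ ≤ _ := hFatou
  have hliminf : liminf (fun n => ∫⁻ u in Set.Ioc lam 1, ENNReal.ofReal (F n u)) atTop
      ≤ ENNReal.ofReal M := by
    calc liminf (fun n => ∫⁻ u in Set.Ioc lam 1, ENNReal.ofReal (F n u)) atTop
        ≤ liminf (fun _ : ℕ => ENNReal.ofReal M) atTop :=
          Filter.liminf_le_liminf (Eventually.of_forall hIle)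
      _ = ENNReal.ofReal M := liminf_const _
  have hone : IntegrableOn (fun u : ℝ => 1/u) (Set.Ioc lam 1) := by
    apply Measure.integrableOn_of_bounded (M := 1/lam) measure_Ioc_lt_top.ne
      (Measurable.aestronglyMeasurable (by fun_prop))
    filter_upwards [ae_restrict_mem measurableSet_Ioc] with u hu
    have hu0 : 0 < u := lt_trans hlam0 hu.1
    rw [Real.norm_eq_abs, abs_of_pos (by positivity)]
    exact one_div_le_one_div_of_le hlam0 hu.1.le
  have hval : ∫ u in Set.Ioc lam 1, 1/u = K + 1 := by
    rw [← intervalIntegral.integral_of_le hlam1.le, integral_one_div]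
    · rw [one_div, Real.log_inv, hlamdef, Real.log_exp]; ring
    · intro h
      rw [Set.uIcc_of_le hlam1.le] at h
      exact absurd h.1 (not_le.mpr hlam0)
  have hcomp : ENNReal.ofReal (K+1) = ∫⁻ u in Set.Ioc lam 1, ENNReal.ofReal (1/u) := by
    rw [← hval]
    apply ofReal_integral_eq_lintegral_ofReal hone
    filter_upwards [ae_restrict_mem measurableSet_Ioc] with u hu
    have hu0 : 0 < u := lt_trans hlam0 hu.1
    positivity
  have hfin : ENNReal.ofReal (K+1) ≤ ENNReal.ofReal M := by
    rw [hcomp]; exact hlhs.trans hliminf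
  rw [ENNReal.ofReal_le_ofReal_iff hM0.le] at hfin
  have hMK : M ≤ K := le_max_left _ _
  have hK0 : (0:ℝ) ≤ K := le_max_right _ _
  linarith

theorem slowly_varying_ratio_tendsto_zero (B : ℝ) (ℓ : ℝ → ℝ)
    (hmeas : Measurable ℓ)
    (hpos : ∀ x, B ≤ x → 0 < ℓ x)
    (hloc : ∀ x : ℝ, ∃ C : ℝ, ∀ y ∈ Set.Icc B x, ℓ y ≤ C)
    (hsv : ∀ lam : ℝ, 0 < lam →
      Tendsto (fun x => ℓ (lam * x) / ℓ x) atTop (nhds 1))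
    (hdiv : Tendsto (fun x => ∫ s in Set.Ioc B x, ℓ s / s) atTop atTop) :
    Tendsto (fun x => ℓ x / ∫ s in Set.Ioc B x, ℓ s / s) atTop (nhds 0) := by
  have hBB' : B ≤ max B 1 := le_max_left _ _
  have hB'1 : (1:ℝ) ≤ max B 1 := le_max_right _ _
  have hcore := sv_core (max B 1) hB'1 ℓ hmeas (fun x hx => hpos x (le_trans hBB' hx))
    (fun x => ⟨(hloc x).choose, fun y hy => (hloc x).choose_spec y ⟨le_trans hBB' hy.1, hy.2⟩⟩)
    hsv
  set L : ℝ → ℝ := fun x => ∫ s in Set.Ioc B x, ℓ s / s with hLdef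
  set L' : ℝ → ℝ := fun x => ∫ s in Set.Ioc (max B 1) x, ℓ s / s with hL'def
  have hdiv' : Tendsto L atTop atTop := hdiv
  have hcore' : Tendsto (fun x => L' x / ℓ x) atTop atTop := hcore
  have hev : ∀ᶠ x in atTop, IntegrableOn (fun s => ℓ s / s) (Set.Ioc B x) := by
    filter_upwards [hdiv'.eventually (eventually_ge_atTop 1)] with x hx
    by_contra hni
    have := integral_undef hni
    have hLx : L x = 0 := this
    rw [hLx] at hx; linarith
  obtain ⟨x₀, hx₀int, hx₀ge⟩ := (hev.and (eventually_ge_atTop (max B 1))).exists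
  have hcB : IntegrableOn (fun s => ℓ s / s) (Set.Ioc B (max B 1)) :=
    hx₀int.mono_set (Set.Ioc_subset_Ioc_right hx₀ge)
  set c₀ : ℝ := ∫ s in Set.Ioc B (max B 1), ℓ s / s with hc₀
  have hsplit : ∀ᶠ x in atTop, L x = c₀ + L' x := by
    filter_upwards [hev, eventually_ge_atTop (max B 1)] with x hxint hxB
    have hdisj : Disjoint (Set.Ioc B (max B 1)) (Set.Ioc (max B 1) x) := by
      rw [Set.Ioc_disjoint_Ioc]
      exact le_trans (min_le_left _ _) (le_max_right _ _)
    have := setIntegral_union (f := fun s => ℓ s / s) (μ := volume) hdisj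
      measurableSet_Ioc hcB (hxint.mono_set (Set.Ioc_subset_Ioc_left hBB'))
    rw [Set.Ioc_union_Ioc_eq_Ioc hBB' hxB] at this
    exact this
  have hL'div : Tendsto L' atTop atTop := by
    apply (tendsto_atTop_add_const_right atTop (-c₀) hdiv').congr'
    filter_upwards [hsplit] with x h
    rw [h]; ring
  have h1 : ∀ᶠ x in atTop, 1 ≤ L' x := hL'div.eventually (eventually_ge_atTop 1)
  have h2 : ∀ᶠ x in atTop, 1 ≤ L x := hdiv'.eventually (eventually_ge_atTop 1)
  have h3 : ∀ᶠ x in atTop, 0 < ℓ x :=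
    (eventually_ge_atTop B).mono fun x hx => hpos x hx
  have ht1 : Tendsto (fun x => ℓ x / L' x) atTop (nhds 0) := by
    have h := hcore'.inv_tendsto_atTop
    apply h.congr fun x => ?_
    simp [Pi.inv_apply, inv_div]
  have ht2 : Tendsto (fun x => c₀ / L x) atTop (nhds 0) :=
    Tendsto.div_atTop tendsto_const_nhds hdiv'
  have ht3 : Tendsto (fun x => L' x / L x) atTop (nhds 1) := by
    have hsub : Tendsto (fun x => 1 - c₀ / L x) atTop (nhds 1) := by
      simpa using tendsto_const_nhds.sub ht2
    apply hsub.congr'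
    filter_upwards [hsplit, h2] with x hs h2x
    have hLx : L x ≠ 0 := by linarith
    field_simp
    linarith [hs]
  have hfin := ht1.mul ht3
  rw [zero_mul] at hfin
  apply hfin.congr'
  filter_upwards [h1, h2] with x h1x h2x
  have hL'x : L' x ≠ 0 := by linarith
  have hLx : L x ≠ 0 := by linarith
  field_simp
  exact (mul_div_cancel_right₀ (ℓ x) hLx).symm
end

section
/- Let ℓ be a slowly varying, locally bounded measurable function on [B,∞) with ∫_B^∞ ℓ(s)/s ds = ∞. Then ℓ̃(x) := ∫_B^x ℓ(s)/s ds is itself slowly varying. -/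
open Filter MeasureTheory

private lemma aux_int {g : ℝ → ℝ} (hg : Measurable g) {a b C : ℝ}
    (hbd : ∀ s ∈ Set.Ioc a b, |g s| ≤ C) :
    MeasureTheory.IntegrableOn g (Set.Ioc a b) := by
  refine MeasureTheory.Measure.integrableOn_of_bounded (M := C) measure_Ioc_lt_top.ne
    hg.aestronglyMeasurable ?_
  filter_upwards [MeasureTheory.ae_restrict_mem measurableSet_Ioc] with s hs
  simpa [Real.norm_eq_abs] using hbd s hs

theorem integral_of_slowly_varying_is_slowly_varying (B : ℝ) (ℓ : ℝ → ℝ)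
    (hmeas : Measurable ℓ)
    (hpos : ∀ x, B ≤ x → 0 < ℓ x)
    (hloc : ∀ x : ℝ, ∃ C : ℝ, ∀ y ∈ Set.Icc B x, ℓ y ≤ C)
    (hsv : ∀ lam : ℝ, 0 < lam →
      Tendsto (fun x => ℓ (lam * x) / ℓ x) atTop (nhds 1))
    (hdiv : Tendsto (fun x => ∫ s in Set.Ioc B x, ℓ s / s) atTop atTop) :
    ∀ lam : ℝ, 0 < lam →
      Tendsto (fun x => (∫ s in Set.Ioc B (lam * x), ℓ s / s) /
        ∫ s in Set.Ioc B x, ℓ s / s) atTop (nhds 1) := by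
  classical
  set x₀ : ℝ := max B 0 + 1 with hx₀def
  have hB' : B < x₀ := lt_of_le_of_lt (le_max_left _ _) (lt_add_one _)
  have hx₀1 : (1:ℝ) ≤ x₀ := le_add_of_nonneg_left (le_max_right _ _)
  have hx₀0 : (0:ℝ) < x₀ := lt_of_lt_of_le one_pos hx₀1
  set f : ℝ → ℝ := fun s => ℓ s / s with hfdef
  set L : ℝ → ℝ := fun x => ∫ s in Set.Ioc B x, f s with hLdef
  suffices hS : ∀ lam : ℝ, 0 < lam →
      Tendsto (fun x => L (lam * x) / L x) atTop (nhds 1) from hS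
  have hmeasf : Measurable f := hmeas.div measurable_id
  have hfeval : ∀ s : ℝ, f s = ℓ s / s := fun s => rfl
  have hLeval : ∀ x : ℝ, L x = ∫ s in Set.Ioc B x, f s := fun x => rfl
  clear_value f L
  clear hfdef hLdef
  clear_value x₀
  clear hx₀def
  -- integrability on tails
  have hIntTail : ∀ a b : ℝ, x₀ ≤ a → IntegrableOn f (Set.Ioc a b) := by
    intro a b ha
    obtain ⟨C, hC⟩ := hloc b
    refine aux_int hmeasf (C := C) ?_
    intro s hs
    have hs0 : 0 < s := lt_of_lt_of_le hx₀0 (le_trans ha hs.1.le)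
    have hsB : B ≤ s := le_trans hB'.le (le_trans ha hs.1.le)
    have h1 : ℓ s ≤ C := hC s ⟨hsB, hs.2⟩
    have h2 : 0 < ℓ s := hpos s hsB
    have hs1 : 1 ≤ s := le_trans hx₀1 (le_trans ha hs.1.le)
    rw [hfeval, abs_of_nonneg (div_nonneg h2.le hs0.le)]
    calc ℓ s / s ≤ ℓ s := div_le_self h2.le hs1
      _ ≤ C := h1
  -- integrability on the whole Ioc B x
  have hInt0 : IntegrableOn f (Set.Ioc B x₀) := by
    by_contra hni
    have h0 : ∀ x : ℝ, x₀ ≤ x → L x = 0 := by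
      intro x hx
      rw [hLeval]
      apply MeasureTheory.integral_undef
      intro hint
      exact hni (MeasureTheory.IntegrableOn.mono_set hint (Set.Ioc_subset_Ioc_right hx))
    obtain ⟨x, hx1, hx2⟩ := ((hdiv.eventually_ge_atTop 1).and (eventually_ge_atTop x₀)).exists
    have h := h0 x hx2
    rw [h] at hx1
    linarith
  have hIntFull : ∀ x : ℝ, IntegrableOn f (Set.Ioc B x) := by
    intro x
    rcases le_or_gt x x₀ with h | h
    · exact hInt0.mono_set (Set.Ioc_subset_Ioc_right h)
    · have h2 := hInt0.union (hIntTail x₀ x le_rfl)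
      rwa [Set.Ioc_union_Ioc_eq_Ioc hB'.le h.le] at h2
  -- additivity of L
  have hLadd : ∀ y z : ℝ, x₀ ≤ y → y ≤ z → L z = L y + ∫ s in Set.Ioc y z, f s := by
    intro y z hy hyz
    have h := MeasureTheory.setIntegral_union (f := f) (μ := volume)
      (Set.Ioc_disjoint_Ioc_of_le le_rfl) measurableSet_Ioc (hIntFull y) (hIntTail y z hy)
    rw [Set.Ioc_union_Ioc_eq_Ioc (le_trans hB'.le hy) hyz] at h
    rw [hLeval z, hLeval y]
    exact h
  have hfpos : ∀ s : ℝ, x₀ < s → 0 ≤ f s := by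
    intro s hs
    rw [hfeval]
    exact div_nonneg (hpos s (le_trans hB'.le hs.le)).le (le_trans hx₀0.le hs.le)
  have hmono : ∀ y z : ℝ, x₀ ≤ y → y ≤ z → L y ≤ L z := by
    intro y z hy hyz
    rw [hLadd y z hy hyz]
    have h : 0 ≤ ∫ s in Set.Ioc y z, f s :=
      MeasureTheory.setIntegral_nonneg measurableSet_Ioc
        (fun s hs => hfpos s (lt_of_le_of_lt hy hs.1))
    linarith
  -- threshold where L ≥ 1
  obtain ⟨x₁', hx₁'⟩ := Filter.eventually_atTop.mp (hdiv.eventually_ge_atTop 1)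
  set x₁ : ℝ := max x₁' x₀ with hx₁def
  have hx₁0 : x₀ ≤ x₁ := le_max_right _ _
  have hx₁1 : (1:ℝ) ≤ x₁ := le_trans hx₀1 hx₁0
  have hBx₁ : B ≤ x₁ := le_trans hB'.le hx₁0
  have hx₁L : ∀ y, x₁ ≤ y → 1 ≤ L y := fun y hy => hx₁' y (le_trans (le_max_left _ _) hy)
  clear_value x₁
  clear hx₁def hx₁'
  -- KEY STEP: L x / ℓ x → ∞
  have hE : Tendsto (fun x => L x / ℓ x) atTop atTop := by
    rw [tendsto_atTop]
    intro b
    set M : ℝ := max b 1 with hMdef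
    have hM1 : (1:ℝ) ≤ M := le_max_right _ _
    have hMb : b ≤ M := le_max_left _ _
    clear_value M
    clear hMdef
    have hmain : ∀ᶠ x in atTop, M ≤ L x / ℓ x := by
      by_contra hcon
      rw [Filter.not_eventually] at hcon
      set δ : ℝ := Real.exp (-(M+2)) with hδdef
      have hδ0 : 0 < δ := Real.exp_pos _
      have hδ1 : δ < 1 := Real.exp_lt_one_iff.mpr (by linarith)
      have hδlog : Real.log (1/δ) = M + 2 := by
        rw [hδdef, one_div, ← Real.exp_neg, neg_neg, Real.log_exp]
      clear_value δ
      clear hδdef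
      have hfreq := Filter.frequently_atTop.mp (hcon.mono (fun x hx => lt_of_not_ge hx))
      have hex : ∀ n : ℕ, ∃ x : ℝ, max (n : ℝ) (x₁ / δ) ≤ x ∧ L x / ℓ x < M := by
        intro n
        obtain ⟨x, hx1, hx2⟩ := hfreq (max (n:ℝ) (x₁/δ))
        exact ⟨x, hx1, hx2⟩
      choose u hu1 hu2 using hex
      have hun : ∀ n : ℕ, (n:ℝ) ≤ u n := fun n => le_trans (le_max_left _ _) (hu1 n)
      have htu : Tendsto u atTop atTop :=
        tendsto_atTop_mono hun tendsto_natCast_atTop_atTop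
      have huδ : ∀ n, x₁ ≤ δ * u n := by
        intro n
        have h := le_trans (le_max_right _ _) (hu1 n)
        rw [div_le_iff₀ hδ0] at h
        linarith
      have hu0 : ∀ n, 0 < u n := by
        intro n
        have h := le_trans (le_max_right _ _) (hu1 n)
        have h2 : 0 < x₁ / δ := div_pos (lt_of_lt_of_le one_pos hx₁1) hδ0
        linarith
      have hδu_le : ∀ n, δ * u n ≤ u n := fun n => mul_le_of_le_one_left (hu0 n).le hδ1.le
      have hux₁ : ∀ n, x₁ ≤ u n := fun n => le_trans (huδ n) (hδu_le n)
      have hlpos : ∀ n, 0 < ℓ (u n) := fun n => hpos _ (le_trans hBx₁ (hux₁ n))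
      have hmem : ∀ n : ℕ, ∀ t ∈ Set.Ioc δ (1:ℝ), B ≤ t * u n ∧ t * u n ≤ u n := by
        intro n t ht
        have h1 : δ * u n ≤ t * u n := mul_le_mul_of_nonneg_right ht.1.le (hu0 n).le
        exact ⟨by linarith [huδ n], mul_le_of_le_one_left (hu0 n).le ht.2⟩
      -- substitution
      have hsubst : ∀ n : ℕ, (∫ t in Set.Ioc δ (1:ℝ), ℓ (t * u n) / t)
          = ∫ s in Set.Ioc (δ * u n) (u n), f s := by
        intro n
        have hc : u n ≠ 0 := (hu0 n).ne'
        have h1 : Set.EqOn (fun t => ℓ (t * u n) / t) (fun t => u n • f (u n * t))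
            (Set.Ioc δ 1) := by
          intro t ht
          have ht0 : 0 < t := lt_trans hδ0 ht.1
          simp only [hfeval, smul_eq_mul, mul_comm t (u n)]
          field_simp
        rw [MeasureTheory.setIntegral_congr_fun measurableSet_Ioc h1,
          ← intervalIntegral.integral_of_le hδ1.le,
          intervalIntegral.integral_smul,
          intervalIntegral.integral_comp_mul_left f hc,
          smul_smul, mul_inv_cancel₀ hc, one_smul, mul_one, mul_comm (u n) δ,
          intervalIntegral.integral_of_le (hδu_le n)]
      have hbound : ∀ n : ℕ, (∫ t in Set.Ioc δ (1:ℝ), ℓ (t * u n) / t) ≤ L (u n) := by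
        intro n
        rw [hsubst n]
        have h := hLadd (δ * u n) (u n) (le_trans hx₁0 (huδ n)) (hδu_le n)
        have h2 : (1:ℝ) ≤ L (δ * u n) := hx₁L _ (huδ n)
        linarith
      have hgint : ∀ n : ℕ, IntegrableOn (fun t => ℓ (t * u n) / t) (Set.Ioc δ (1:ℝ)) := by
        intro n
        obtain ⟨C, hC⟩ := hloc (u n)
        have hC0 : 0 ≤ C := le_trans (hpos (u n) (le_trans hBx₁ (hux₁ n))).le
          (hC (u n) ⟨le_trans hBx₁ (hux₁ n), le_refl _⟩)
        refine aux_int (g := fun t => ℓ (t * u n) / t)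
          ((hmeas.comp (measurable_id.mul_const (u n))).div measurable_id)
          (C := C/δ) ?_
        intro t ht
        have ht0 : 0 < t := lt_trans hδ0 ht.1
        obtain ⟨hm1, hm2⟩ := hmem n t ht
        have h1 : ℓ (t * u n) ≤ C := hC _ ⟨hm1, hm2⟩
        have h2 : 0 < ℓ (t * u n) := hpos _ hm1
        show |ℓ (t * u n) / t| ≤ C / δ
        rw [abs_of_nonneg (div_nonneg h2.le ht0.le)]
        exact div_le_div₀ hC0 h1 hδ0 ht.1.le
      have hIle : ∀ n : ℕ, (∫ t in Set.Ioc δ (1:ℝ), ℓ (t * u n) / t / ℓ (u n)) ≤ M := by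
        intro n
        rw [MeasureTheory.integral_div]
        have h1 : (∫ t in Set.Ioc δ (1:ℝ), ℓ (t * u n) / t) / ℓ (u n)
            ≤ L (u n) / ℓ (u n) :=
          (div_le_div_iff_of_pos_right (hlpos n)).mpr (hbound n)
        exact le_trans h1 (hu2 n).le
      -- Fatou
      have hmeasn : ∀ n : ℕ, Measurable (fun t => ENNReal.ofReal (ℓ (t * u n) / t / ℓ (u n))) :=
        fun n => (((hmeas.comp (measurable_id.mul_const (u n))).div measurable_id).div_const
          _).ennreal_ofReal
      have hFatou := MeasureTheory.lintegral_liminf_le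
        (f := fun n t => ENNReal.ofReal (ℓ (t * u n) / t / ℓ (u n)))
        (μ := volume.restrict (Set.Ioc δ 1)) (u := atTop) hmeasn
      have hliminf : ∀ᵐ t ∂(volume.restrict (Set.Ioc δ (1:ℝ))),
          Filter.liminf (fun n => ENNReal.ofReal (ℓ (t * u n) / t / ℓ (u n))) atTop
            = ENNReal.ofReal (1 / t) := by
        filter_upwards [MeasureTheory.ae_restrict_mem measurableSet_Ioc] with t ht
        have ht0 : 0 < t := lt_trans hδ0 ht.1
        have h1 : Tendsto (fun n => ℓ (t * u n) / ℓ (u n)) atTop (nhds 1) :=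
          (hsv t ht0).comp htu
        have h2 := h1.div_const t
        have heq : (fun n => ℓ (t * u n) / t / ℓ (u n))
            = fun n => ℓ (t * u n) / ℓ (u n) / t := by
          funext n; rw [div_right_comm]
        have htend : Tendsto (fun n => ℓ (t * u n) / t / ℓ (u n)) atTop (nhds (1 / t)) := by
          rw [heq]; exact h2
        exact (ENNReal.tendsto_ofReal htend).liminf_eq
      have hint1t : IntegrableOn (fun t : ℝ => 1 / t) (Set.Ioc δ (1:ℝ)) := by
        refine aux_int (g := fun t : ℝ => 1 / t) (measurable_const.div measurable_id)
          (C := 1/δ) ?_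
        intro t ht
        have ht0 : 0 < t := lt_trans hδ0 ht.1
        show |1 / t| ≤ 1 / δ
        rw [abs_of_nonneg (by positivity)]
        exact div_le_div₀ zero_le_one le_rfl hδ0 ht.1.le
      have hnn : 0 ≤ᶠ[MeasureTheory.ae (volume.restrict (Set.Ioc δ (1:ℝ)))]
          fun t : ℝ => 1 / t := by
        filter_upwards [MeasureTheory.ae_restrict_mem measurableSet_Ioc] with t ht
        have ht0 : 0 < t := lt_trans hδ0 ht.1
        show (0:ℝ) ≤ 1 / t
        positivity
      have hLHS : (∫⁻ t in Set.Ioc δ (1:ℝ), ENNReal.ofReal (1 / t))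
          = ENNReal.ofReal (M + 2) := by
        rw [← MeasureTheory.ofReal_integral_eq_lintegral_ofReal hint1t hnn]
        congr 1
        rw [← intervalIntegral.integral_of_le hδ1.le,
          integral_one_div (Set.notMem_uIcc_of_lt hδ0 one_pos)]
        exact hδlog
      have hRHS : Filter.liminf
          (fun n => ∫⁻ t in Set.Ioc δ (1:ℝ), ENNReal.ofReal (ℓ (t * u n) / t / ℓ (u n))) atTop
          ≤ ENNReal.ofReal M := by
        have heach : ∀ n : ℕ, (∫⁻ t in Set.Ioc δ (1:ℝ),
            ENNReal.ofReal (ℓ (t * u n) / t / ℓ (u n))) ≤ ENNReal.ofReal M := by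
          intro n
          have hnn2 : 0 ≤ᶠ[MeasureTheory.ae (volume.restrict (Set.Ioc δ (1:ℝ)))]
              fun t : ℝ => ℓ (t * u n) / t / ℓ (u n) := by
            filter_upwards [MeasureTheory.ae_restrict_mem measurableSet_Ioc] with t ht
            have ht0 : 0 < t := lt_trans hδ0 ht.1
            have h2 : 0 < ℓ (t * u n) := hpos _ (hmem n t ht).1
            have h3 := hlpos n
            show (0:ℝ) ≤ ℓ (t * u n) / t / ℓ (u n)
            positivity
          rw [← MeasureTheory.ofReal_integral_eq_lintegral_ofReal
            ((hgint n).div_const _) hnn2]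
          exact ENNReal.ofReal_le_ofReal (hIle n)
        calc Filter.liminf _ atTop
            ≤ Filter.liminf (fun _ : ℕ => ENNReal.ofReal M) atTop :=
              Filter.liminf_le_liminf (Filter.Eventually.of_forall heach)
          _ = ENNReal.ofReal M := Filter.liminf_const _
      have hchain : ENNReal.ofReal (M + 2) ≤ ENNReal.ofReal M := by
        calc ENNReal.ofReal (M + 2)
            = ∫⁻ t in Set.Ioc δ (1:ℝ), ENNReal.ofReal (1 / t) := hLHS.symm
          _ = ∫⁻ t in Set.Ioc δ (1:ℝ),
              Filter.liminf (fun n => ENNReal.ofReal (ℓ (t * u n) / t / ℓ (u n))) atTop :=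
              (MeasureTheory.lintegral_congr_ae hliminf).symm
          _ ≤ Filter.liminf (fun n => ∫⁻ t in Set.Ioc δ (1:ℝ),
              ENNReal.ofReal (ℓ (t * u n) / t / ℓ (u n))) atTop := hFatou
          _ ≤ ENNReal.ofReal M := hRHS
      have hcontra : M + 2 ≤ M :=
        (ENNReal.ofReal_le_ofReal_iff (by linarith)).mp hchain
      linarith
    exact hmain.mono (fun x hx => le_trans hMb hx)
  -- consequence : ℓ x / L x → 0
  have hℓL : Tendsto (fun x => ℓ x / L x) atTop (nhds 0) := by
    have h := hE.inv_tendsto_atTop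
    have heq : (fun x => L x / ℓ x)⁻¹ = fun x => ℓ x / L x := by
      funext x; simp [Pi.inv_apply, inv_div]
    rwa [heq] at h
  -- Main claim for lam > 1
  have key : ∀ lam : ℝ, 1 < lam → Tendsto (fun x => L (lam * x) / L x) atTop (nhds 1) := by
    intro lam hlam
    have hlam0 : (0:ℝ) < lam := lt_trans one_pos hlam
    have hlog : 0 < Real.log lam := Real.log_pos hlam
    rw [Metric.tendsto_nhds]
    intro ε hε
    set c : ℝ := min 2⁻¹ (ε/(2+ε)) with hcdef
    have hc0 : 0 < c := lt_min (by norm_num) (div_pos hε (by linarith))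
    have hc2 : c ≤ 2⁻¹ := min_le_left _ _
    have hcε : c ≤ ε/(2+ε) := min_le_right _ _
    clear_value c
    clear hcdef
    have h1c : 0 < 1 - c := by
      have h : (2:ℝ)⁻¹ < 1 := by norm_num
      linarith
    set ε₀ : ℝ := c / Real.log lam with hε₀def
    have hε₀0 : 0 < ε₀ := div_pos hc0 hlog
    have hε₀c : ε₀ * Real.log lam = c := by
      rw [hε₀def]; field_simp
    clear_value ε₀
    clear hε₀def
    have hev : ∀ᶠ x in atTop, ℓ x / L x < ε₀ := hℓL.eventually_lt_const hε₀0
    obtain ⟨x₂', hx₂'⟩ := Filter.eventually_atTop.mp hev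
    set x₂ : ℝ := max x₂' x₁ with hx₂def
    have hx₂1 : x₁ ≤ x₂ := le_max_right _ _
    have hℓle : ∀ s, x₂ ≤ s → ℓ s ≤ ε₀ * L s := by
      intro s hs
      have h1 : ℓ s / L s < ε₀ := hx₂' s (le_trans (le_max_left _ _) hs)
      have h2 : (1:ℝ) ≤ L s := hx₁L s (le_trans (le_max_right _ _) hs)
      have h3 : ℓ s = (ℓ s / L s) * L s := by field_simp
      rw [h3]
      exact mul_le_mul_of_nonneg_right h1.le (by linarith)
    clear_value x₂
    clear hx₂def hx₂'
    filter_upwards [eventually_ge_atTop x₂] with x hx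
    have hx₁x : x₁ ≤ x := le_trans hx₂1 hx
    have hx₀x : x₀ ≤ x := le_trans hx₁0 hx₁x
    have hx0 : (0:ℝ) < x := lt_of_lt_of_le hx₀0 hx₀x
    have hxl : x ≤ lam * x := le_mul_of_one_le_left hx0.le hlam.le
    have hL1 : (1:ℝ) ≤ L x := hx₁L x hx₁x
    have hLmono : L x ≤ L (lam * x) := hmono x (lam * x) hx₀x hxl
    have hL1' : (1:ℝ) ≤ L (lam * x) := le_trans hL1 hLmono
    have hadd := hLadd x (lam * x) hx₀x hxl
    -- bound the increment
    have hint1 : IntegrableOn f (Set.Ioc x (lam * x)) := hIntTail x (lam * x) hx₀x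
    have hint2 : IntegrableOn (fun s => ε₀ * L (lam * x) * (1 / s)) (Set.Ioc x (lam * x)) := by
      refine aux_int (g := fun s => ε₀ * L (lam * x) * (1 / s))
        (measurable_const.mul (measurable_const.div measurable_id))
        (C := |ε₀ * L (lam * x)| * (1 / x)) ?_
      intro s hs
      have hs0 : 0 < s := lt_trans hx0 hs.1
      show |ε₀ * L (lam * x) * (1 / s)| ≤ |ε₀ * L (lam * x)| * (1 / x)
      rw [abs_mul, abs_of_nonneg (by positivity : (0:ℝ) ≤ 1 / s)]
      exact mul_le_mul_of_nonneg_left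
        (div_le_div₀ zero_le_one le_rfl hx0 hs.1.le) (abs_nonneg _)
    have hptw : ∀ s ∈ Set.Ioc x (lam * x), f s ≤ ε₀ * L (lam * x) * (1 / s) := by
      intro s hs
      have hs0 : 0 < s := lt_trans hx0 hs.1
      have h1 : ℓ s ≤ ε₀ * L s := hℓle s (le_trans hx hs.1.le)
      have h2 : L s ≤ L (lam * x) := hmono s (lam * x) (le_trans hx₀x hs.1.le) hs.2
      have h3 : ℓ s ≤ ε₀ * L (lam * x) :=
        le_trans h1 (mul_le_mul_of_nonneg_left h2 hε₀0.le)
      rw [hfeval, mul_one_div]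
      exact (div_le_div_iff_of_pos_right hs0).mpr h3
    have hintval : (∫ s in Set.Ioc x (lam * x), (1:ℝ) / s) = Real.log lam := by
      rw [← intervalIntegral.integral_of_le hxl,
        integral_one_div (Set.notMem_uIcc_of_lt hx0 (lt_of_lt_of_le hx0 hxl)),
        mul_div_cancel_right₀ lam hx0.ne']
    have hstep : (∫ s in Set.Ioc x (lam * x), f s) ≤ c * L (lam * x) := by
      have h1 := MeasureTheory.setIntegral_mono_on hint1 hint2 measurableSet_Ioc hptw
      have h2 : (∫ s in Set.Ioc x (lam * x), ε₀ * L (lam * x) * (1 / s))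
          = ε₀ * L (lam * x) * Real.log lam := by
        rw [integral_const_mul, hintval]
      have h3 : ε₀ * L (lam * x) * Real.log lam = c * L (lam * x) := by
        rw [mul_right_comm, hε₀c]
      rw [h2, h3] at h1
      exact h1
    have hkey : L (lam * x) * (1 - c) ≤ L x := by nlinarith
    have hr1 : (1:ℝ) ≤ L (lam * x) / L x := (one_le_div (by linarith)).mpr hLmono
    have hr2 : L (lam * x) / L x ≤ (1 - c)⁻¹ := by
      rw [div_le_iff₀ (by linarith : (0:ℝ) < L x)]
      have hinv : (1 - c) * (1 - c)⁻¹ = 1 := mul_inv_cancel₀ h1c.ne'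
      have hinvpos : 0 < (1 - c)⁻¹ := inv_pos.mpr h1c
      nlinarith
    have hfinal : (1 - c)⁻¹ ≤ 1 + ε / 2 := by
      have hce : c * (2 + ε) ≤ ε := by
        rw [← le_div_iff₀ (by linarith : (0:ℝ) < 2 + ε)]
        exact hcε
      rw [inv_eq_one_div, div_le_iff₀ h1c]
      nlinarith
    rw [Real.dist_eq, abs_of_nonneg (by linarith : (0:ℝ) ≤ L (lam * x) / L x - 1)]
    linarith
  -- conclusion
  intro lam hlam0
  rcases lt_trichotomy lam 1 with h1 | h1 | h1
  · have hμ : 1 < lam⁻¹ := (one_lt_inv₀ hlam0).mpr h1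
    have hcomp : Tendsto (fun x : ℝ => lam * x) atTop atTop :=
      Tendsto.const_mul_atTop hlam0 tendsto_id
    have T := (key lam⁻¹ hμ).comp hcomp
    have heq : ((fun x => L (lam⁻¹ * x) / L x) ∘ fun x => lam * x)
        = fun x => L x / L (lam * x) := by
      funext x
      simp only [Function.comp]
      rw [← mul_assoc, inv_mul_cancel₀ hlam0.ne', one_mul]
    rw [heq] at T
    have T2 := T.inv₀ one_ne_zero
    have heq2 : (fun x => (L x / L (lam * x))⁻¹) = fun x => L (lam * x) / L x := by
      funext x; rw [inv_div]
    rwa [heq2, inv_one] at T2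
  · subst h1
    have hev1 : ∀ᶠ x in atTop, (1:ℝ) = L (1 * x) / L x := by
      filter_upwards [eventually_ge_atTop x₁] with x hx
      rw [one_mul, div_self (lt_of_lt_of_le zero_lt_one (hx₁L x hx)).ne']
    exact Tendsto.congr' hev1 tendsto_const_nhds
  · exact key lam h1
end
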